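/- Let f : U → V be a map in the set-up and let X be a finite union of puzzle pieces which is nice. Then for every z ∈ D(X) ∖ X and every integer i with 0 ≤ i < k(z), one has f^i(L_z(X)) ∩ X = ∅. -/

import Mathlib

open Set Function Topology

noncomputable section

/-- A (bounded) Jordan domain in the plane: a bounded connected open set whose
frontier is a Jordan curve, i.e. an injective continuous image of the circle. -/
def IsJordanDomain (Ω : Set ℂ) : Prop :=
  IsOpen Ω ∧ IsConnected Ω ∧ Bornology.IsBounded Ω ∧
  ∃ g : Metric.sphere (0:ℂ) 1 → ℂ, Continuous g ∧ Function.Injective g ∧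
    Set.range g = frontier Ω

/-- `A` is strictly contained in `X`: it is a proper subset of some connected
component of `X`. -/
def StrictlyContainedIn (A X : Set ℂ) : Prop :=
  ∃ x ∈ X, A ⊂ connectedComponentIn X x

/-- The set-up: `V ⊆ ℂ` is open with finitely many components, each a bounded Jordan
domain, with pairwise disjoint closures; `U` is open with closure contained in `V`,
with finitely many components with pairwise disjoint closures; `f : U → V` is proper
holomorphic; every critical point of `f` lies in `K_f`. -/
structure Setup where
  U : Set ℂ
  V : Set ℂ
  f : ℂ → ℂ
  hV_open : IsOpen V
  hV_comp_finite : {C : Set ℂ | ∃ x ∈ V, C = connectedComponentIn V x}.Finite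
  hV_jordan : ∀ x ∈ V, IsJordanDomain (connectedComponentIn V x)
  hV_disj : ∀ x ∈ V, ∀ y ∈ V, connectedComponentIn V x ≠ connectedComponentIn V y →
    closure (connectedComponentIn V x) ∩ closure (connectedComponentIn V y) = ∅
  hU_open : IsOpen U
  hUV : closure U ⊆ V
  hU_comp_finite : {C : Set ℂ | ∃ x ∈ U, C = connectedComponentIn U x}.Finite
  hU_disj : ∀ x ∈ U, ∀ y ∈ U, connectedComponentIn U x ≠ connectedComponentIn U y →
    closure (connectedComponentIn U x) ∩ closure (connectedComponentIn U y) = ∅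
  hf_maps : Set.MapsTo f U V
  hf_holo : DifferentiableOn ℂ f U
  hf_proper : ∀ K ⊆ V, IsCompact K → IsCompact (U ∩ f ⁻¹' K)
  hf_crit : ∀ z ∈ U, deriv f z = 0 → ∀ n : ℕ, f^[n] z ∈ U

namespace Setup

variable (S : Setup)

/-- `K_f = {z ∈ U : f^n(z) ∈ U for all n}`. -/
def K : Set ℂ := {z | z ∈ S.U ∧ ∀ n : ℕ, S.f^[n] z ∈ S.U}

/-- The set of critical points of `f`. -/
def Crit : Set ℂ := {z | z ∈ S.U ∧ deriv S.f z = 0}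

/-- `preV n = f^{-n}(V)`, preimages being taken for the partial map `f : U → V`. -/
def preV : ℕ → Set ℂ
  | 0 => S.V
  | n+1 => S.U ∩ S.f ⁻¹' (preV n)

/-- `P` is a puzzle piece of depth `n`: a connected component of `f^{-n}(V)`. -/
def IsPieceOfDepth (n : ℕ) (P : Set ℂ) : Prop :=
  ∃ x ∈ S.preV n, P = connectedComponentIn (S.preV n) x

/-- `P` is a puzzle piece. -/
def IsPiece (P : Set ℂ) : Prop := ∃ n, S.IsPieceOfDepth n P

/-- `piece n x = P_n(x)`, the puzzle piece of depth `n` containing `x`. -/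
def piece (n : ℕ) (x : ℂ) : Set ℂ := connectedComponentIn (S.preV n) x

/-- `X` is a finite union of puzzle pieces. -/
def IsPieceUnion (X : Set ℂ) : Prop :=
  ∃ P : Set (Set ℂ), P.Finite ∧ (∀ Q ∈ P, S.IsPiece Q) ∧ X = ⋃₀ P

/-- `X` is nice: for every connected component `P` of `X` and every `n ≥ 1`,
`f^n(P)` is not strictly contained in `X`. -/
def Nice (X : Set ℂ) : Prop :=
  ∀ x ∈ X, ∀ n : ℕ, 1 ≤ n →
    ¬ StrictlyContainedIn (S.f^[n] '' connectedComponentIn X x) X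

/-- `preIm X n = f^{-n}(X)`, preimages being taken for the partial map `f : U → V`. -/
def preIm (X : Set ℂ) : ℕ → Set ℂ
  | 0 => X
  | n+1 => S.U ∩ S.f ⁻¹' (preIm X n)

/-- `D(X) = ⋃_{k ≥ 0} f^{-k}(X)`. -/
def D (X : Set ℂ) : Set ℂ := ⋃ k, S.preIm X k

/-- For `z ∈ D(X) ∖ X`, `k` is the landing time `k(z)`: the minimal positive
integer with `f^k(z) ∈ X`. -/
def IsLandingTime (X : Set ℂ) (z : ℂ) (k : ℕ) : Prop :=
  1 ≤ k ∧ S.f^[k] z ∈ X ∧ ∀ j, 1 ≤ j → j < k → S.f^[j] z ∉ X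

/-- `landComp X z k = Comp_z(f^{-k}(Comp_{f^k(z)}(X)))`; for `k = k(z)` this is
`L_z(X)`. -/
def landComp (X : Set ℂ) (z : ℂ) (k : ℕ) : Set ℂ :=
  connectedComponentIn (S.preIm (connectedComponentIn X (S.f^[k] z)) k) z

/-- `x` combinatorially accumulates to `y`: for every `n ≥ 0` there is `j ≥ 1`
with `f^j(x) ∈ P_n(y)`. -/
def Acc (x y : ℂ) : Prop := ∀ n : ℕ, ∃ j : ℕ, 1 ≤ j ∧ S.f^[j] x ∈ S.piece n y

/-- `Forw(x) = {y ∈ K_f : x → y}`. -/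
def Forw (x : ℂ) : Set ℂ := {y | y ∈ S.K ∧ S.Acc x y}

/-- The equivalence `c1 ∼ c2` on critical points. -/
def Equiv (c1 c2 : ℂ) : Prop := c1 = c2 ∨ (S.Acc c1 c2 ∧ S.Acc c2 c1)

/-- The class `[c]` of a critical point `c`. -/
def cls (c : ℂ) : Set ℂ := {c' | c' ∈ S.Crit ∧ S.Equiv c c'}

/-- `D(f) = Crit(f)/∼`, the set of equivalence classes. -/
def classes : Set (Set ℂ) := {A | ∃ c ∈ S.Crit, A = S.cls c}

/-- `[c1] → [c2]`. -/
def ClassAcc (A B : Set ℂ) : Prop := ∃ c1 ∈ A, ∃ c2 ∈ B, S.Acc c1 c2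

/-- The partial order on classes: `A ≤ B` iff `A = B` or `B → A`. -/
def ClassLe (A B : Set ℂ) : Prop := A = B ∨ S.ClassAcc B A

/-- The minimal elements of a family of classes w.r.t. `ClassLe`. -/
def minimalsIn (T : Set (Set ℂ)) : Set (Set ℂ) :=
  {A | A ∈ T ∧ ∀ B ∈ T, S.ClassLe B A → B = A}

/-- Auxiliary: `(D_k(f), D_0(f) ∪ ⋯ ∪ D_k(f))`. -/
def DlevelAux : ℕ → Set (Set ℂ) × Set (Set ℂ)
  | 0 => (S.minimalsIn S.classes, S.minimalsIn S.classes)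
  | k+1 =>
      (S.minimalsIn (S.classes \ (DlevelAux k).2),
        (DlevelAux k).2 ∪ S.minimalsIn (S.classes \ (DlevelAux k).2))

/-- `Dlevel k = D_k(f)`. -/
def Dlevel (k : ℕ) : Set (Set ℂ) := (S.DlevelAux k).1

/-- Each connected component of `V` contains at most one critical point. -/
def OneCritPerComp : Prop :=
  ∀ c ∈ S.Crit, ∀ c' ∈ S.Crit,
    connectedComponentIn S.V c = connectedComponentIn S.V c' → c = c'

/-- Assumption (∗∗): if `c` does not combinatorially accumulate to `c'`, then
`f^j(c) ∉ P_0(c')` for all `j ≥ 1`. -/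
def StarStar : Prop :=
  ∀ c ∈ S.Crit, ∀ c' ∈ S.Crit, ¬ S.Acc c c' →
    ∀ j : ℕ, 1 ≤ j → S.f^[j] c ∉ S.piece 0 c'

/-- `K_f(x)`, the connected component of `K_f` containing `x`. -/
def Kcomp (x : ℂ) : Set ℂ := connectedComponentIn S.K x

/-- `P_{n+k}(c1)` is a child of `P_n(c2)`: `f^k(P_{n+k}(c1)) = P_n(c2)` and
`f^{k-1}` maps `P_{n+k-1}(f(c1))` conformally onto `P_n(c2)`. -/
def IsChild (c1 : ℂ) (k : ℕ) (n : ℕ) (c2 : ℂ) : Prop :=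
  1 ≤ k ∧ S.f^[k] '' S.piece (n+k) c1 = S.piece n c2 ∧
  Set.InjOn (S.f^[k-1]) (S.piece (n+k-1) (S.f c1)) ∧
  S.f^[k-1] '' S.piece (n+k-1) (S.f c1) = S.piece n c2

/-- `c` is persistently recurrent: for every `n ≥ 0` and every `c' ∈ [c]`,
`P_n(c')` has only finitely many children. -/
def PersistentlyRecurrent (c : ℂ) : Prop :=
  ∀ n : ℕ, ∀ c' ∈ S.cls c,
    {Q : Set ℂ | ∃ c1 ∈ S.cls c, ∃ k : ℕ, S.IsChild c1 k n c' ∧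
      Q = S.piece (n+k) c1}.Finite

/-- `Crit_n(f)`. -/
def CritN : Set ℂ := {c | c ∈ S.Crit ∧ ∀ c' ∈ S.Crit, ¬ S.Acc c c'}

/-- `Crit_e(f)`. -/
def CritE : Set ℂ := {c | c ∈ S.Crit ∧ ¬ S.Acc c c ∧ ∃ c' ∈ S.Crit, S.Acc c c'}

/-- `Crit_r(f)`. -/
def CritR : Set ℂ := {c | c ∈ S.Crit ∧ S.Acc c c ∧ ¬ S.PersistentlyRecurrent c}

/-- `Crit_p(f)`. -/
def CritP : Set ℂ := {c | c ∈ S.Crit ∧ S.Acc c c ∧ S.PersistentlyRecurrent c}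

end Setup
namespace Setup

variable (S : Setup)

lemma f_contOn : ContinuousOn S.f S.U := S.hf_holo.continuousOn

lemma U_subset_V : S.U ⊆ S.V := fun _ hx => S.hUV (subset_closure hx)

lemma preV_succ_subset : ∀ n, S.preV (n + 1) ⊆ S.preV n := by
  intro n
  induction n with
  | zero => exact fun _ hx => S.U_subset_V hx.1
  | succ n ih => exact fun _ hx => ⟨hx.1, ih hx.2⟩

lemma preV_antitone : ∀ {m n : ℕ}, m ≤ n → S.preV n ⊆ S.preV m := by
  intro m n h
  induction h with
  | refl => exact subset_rfl
  | step _ ih => exact (S.preV_succ_subset _).trans ih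

lemma preV_subset_V (n : ℕ) : S.preV n ⊆ S.V := S.preV_antitone (Nat.zero_le n)

lemma preV_subset_U {n : ℕ} : S.preV (n + 1) ⊆ S.U := fun _ h => h.1

lemma isOpen_preV : ∀ n, IsOpen (S.preV n) := by
  intro n
  induction n with
  | zero => exact S.hV_open
  | succ n ih => exact S.f_contOn.isOpen_inter_preimage S.hU_open ih

lemma V_bounded : Bornology.IsBounded S.V := by
  have hsub : S.V ⊆ ⋃ C ∈ {C : Set ℂ | ∃ x ∈ S.V, C = connectedComponentIn S.V x}, C := by
    intro x hx
    exact mem_biUnion ⟨x, hx, rfl⟩ (mem_connectedComponentIn hx)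
  refine Bornology.IsBounded.subset ?_ hsub
  refine (Bornology.isBounded_biUnion S.hV_comp_finite).2 ?_
  rintro C ⟨x, hx, rfl⟩
  exact (S.hV_jordan x hx).2.2.1

lemma iter_preV : ∀ (j : ℕ) {m : ℕ} {x : ℂ}, x ∈ S.preV (j + m) → S.f^[j] x ∈ S.preV m := by
  intro j
  induction j with
  | zero => intro m x h; simpa using h
  | succ j ih =>
    intro m x h
    have e : j + 1 + m = (j + m) + 1 := by omega
    rw [e] at h
    rw [Function.iterate_succ_apply]
    exact ih h.2

lemma iter_mem_U {m j : ℕ} {x : ℂ} (h : x ∈ S.preV m) (hj : j < m) : S.f^[j] x ∈ S.U := by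
  have e : m = j + (m - j) := by omega
  rw [e] at h
  have h2 := S.iter_preV j h
  have e2 : m - j = (m - j - 1) + 1 := by omega
  rw [e2] at h2
  exact S.preV_subset_U h2

lemma cont_iter : ∀ (j : ℕ), ∀ {m : ℕ}, j ≤ m → ContinuousOn (S.f^[j]) (S.preV m) := by
  intro j
  induction j with
  | zero => intro m _; simpa using continuousOn_id
  | succ j ih =>
    intro m h
    rw [Function.iterate_succ']
    exact S.f_contOn.comp (ih (by omega)) (fun x hx => S.iter_mem_U hx (by omega))

lemma cc_closure {A : Set ℂ} (hA : IsOpen A) {x w : ℂ}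
    (hw : w ∈ closure (connectedComponentIn A x)) (hwA : w ∈ A) :
    w ∈ connectedComponentIn A x := by
  obtain ⟨u, hu1, hu2⟩ := mem_closure_iff.mp hw _ hA.connectedComponentIn
    (mem_connectedComponentIn hwA)
  have h1 : connectedComponentIn A x = connectedComponentIn A u := connectedComponentIn_eq hu2
  have h2 : connectedComponentIn A w = connectedComponentIn A u := connectedComponentIn_eq hu1
  rw [h1, ← h2]
  exact mem_connectedComponentIn hwA

lemma preconn_subset {s u : Set ℂ} (hs : IsPreconnected s) (hu : IsOpen u)
    (hne : (s ∩ u).Nonempty) (hcl : ∀ x ∈ s, x ∈ closure u → x ∈ u) : s ⊆ u := by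
  by_contra hns
  have hv : IsOpen (closure u)ᶜ := isClosed_closure.isOpen_compl
  have hcov : s ⊆ u ∪ (closure u)ᶜ := by
    intro x hx
    by_cases h : x ∈ closure u
    · exact Or.inl (hcl x hx h)
    · exact Or.inr h
  have hne2 : (s ∩ (closure u)ᶜ).Nonempty := by
    rcases not_subset.mp hns with ⟨x, hx, hxu⟩
    exact ⟨x, hx, fun hc => hxu (hcl x hx hc)⟩
  obtain ⟨y, hy⟩ := hs u _ hu hv hcov hne hne2
  exact hy.2.2 (subset_closure hy.2.1)

lemma clopen_contra {C : Set ℂ} (hne : C.Nonempty) (ho : IsOpen C)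
    (hcl : closure C ⊆ C) (hCV : C ⊆ S.V) : False := by
  have hclo : IsClopen C := ⟨isClosed_of_closure_subset hcl, ho⟩
  rcases isClopen_iff.mp hclo with h | h
  · exact hne.ne_empty h
  · exact NormedSpace.unbounded_univ ℝ ℂ (h ▸ S.V_bounded.subset hCV)

lemma pieceE {m : ℕ} {x : ℂ} (hx : x ∈ S.preV (m + 1)) :
    S.f '' connectedComponentIn (S.preV (m + 1)) x = connectedComponentIn (S.preV m) (S.f x) := by
  set W := connectedComponentIn (S.preV (m + 1)) x with hW
  have hWsub : W ⊆ S.preV (m + 1) := connectedComponentIn_subset _ _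
  have hWU : W ⊆ S.U := fun w hw => (hWsub hw).1
  have hWopen : IsOpen W := (S.isOpen_preV (m + 1)).connectedComponentIn
  have hWconn : IsPreconnected W := isPreconnected_connectedComponentIn
  have hxW : x ∈ W := mem_connectedComponentIn hx
  have hfx : S.f x ∈ S.preV m := hx.2
  have himg : S.f '' W ⊆ connectedComponentIn (S.preV m) (S.f x) := by
    apply IsPreconnected.subset_connectedComponentIn
    · exact hWconn.image _ (S.f_contOn.mono hWU)
    · exact mem_image_of_mem _ hxW
    · rintro _ ⟨w, hw, rfl⟩; exact (hWsub hw).2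
  have hDsub : connectedComponentIn (S.preV m) (S.f x) ⊆ S.preV m := connectedComponentIn_subset _ _
  have hclosed : ∀ y ∈ connectedComponentIn (S.preV m) (S.f x),
      y ∈ closure (S.f '' W) → y ∈ S.f '' W := by
    intro y hyD hyc
    obtain ⟨r, hr, hball⟩ := Metric.isOpen_iff.mp (S.isOpen_preV m) y (hDsub hyD)
    have hBV : Metric.closedBall y (r / 2) ⊆ S.V :=
      ((Metric.closedBall_subset_ball (by linarith)).trans hball).trans (S.preV_subset_V m)
    have hKc : IsCompact (S.U ∩ S.f ⁻¹' Metric.closedBall y (r / 2)) :=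
      S.hf_proper _ hBV (isCompact_closedBall y (r / 2))
    have hyc2 : y ∈ closure (S.f '' W ∩ Metric.closedBall y (r / 2)) := by
      rw [mem_closure_iff] at hyc ⊢
      intro o ho hyo
      obtain ⟨u, hu1, hu2⟩ := hyc (o ∩ Metric.ball y (r / 2)) (ho.inter Metric.isOpen_ball)
        ⟨hyo, Metric.mem_ball_self (by linarith)⟩
      exact ⟨u, hu1.1, hu2, Metric.ball_subset_closedBall hu1.2⟩
    have hsub2 : S.f '' W ∩ Metric.closedBall y (r / 2) ⊆
        S.f '' ((S.U ∩ S.f ⁻¹' Metric.closedBall y (r / 2)) ∩ closure W) := by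
      rintro _ ⟨⟨w, hw, rfl⟩, hb⟩
      exact ⟨w, ⟨⟨hWU hw, hb⟩, subset_closure hw⟩, rfl⟩
    have hcomp : IsCompact (S.f '' ((S.U ∩ S.f ⁻¹' Metric.closedBall y (r / 2)) ∩ closure W)) := by
      apply IsCompact.image_of_continuousOn (hKc.inter_right isClosed_closure)
      exact S.f_contOn.mono (fun u hu => hu.1.1)
    have hy3 : y ∈ S.f '' ((S.U ∩ S.f ⁻¹' Metric.closedBall y (r / 2)) ∩ closure W) :=
      hcomp.isClosed.closure_subset ((closure_mono hsub2) hyc2)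
    obtain ⟨w, ⟨⟨hwU, _⟩, hwcl⟩, rfl⟩ := hy3
    have hwP : w ∈ S.preV (m + 1) := ⟨hwU, hDsub hyD⟩
    exact mem_image_of_mem _ (cc_closure (S.isOpen_preV (m + 1)) hwcl hwP)
  have hopen : IsOpen (S.f '' W) := by
    have han : AnalyticOnNhd ℂ S.f W := (S.hf_holo.analyticOnNhd S.hU_open).mono hWU
    rcases han.is_constant_or_isOpen hWconn with ⟨c, hc⟩ | h
    · exfalso
      have hcV : c ∈ S.preV m := hc x hxW ▸ hfx
      have hKc : IsCompact (S.U ∩ S.f ⁻¹' {c}) :=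
        S.hf_proper _ (singleton_subset_iff.mpr (S.preV_subset_V m hcV)) isCompact_singleton
      have hWK : W ⊆ S.U ∩ S.f ⁻¹' {c} := fun w hw => ⟨hWU hw, hc w hw⟩
      have hclW : closure W ⊆ W := by
        intro w hw
        have hwK : w ∈ S.U ∩ S.f ⁻¹' {c} :=
          hKc.isClosed.closure_subset (closure_mono hWK hw)
        have hfw : S.f w = c := hwK.2
        have hwP : w ∈ S.preV (m + 1) := ⟨hwK.1, by rw [mem_preimage, hfw]; exact hcV⟩
        exact cc_closure (S.isOpen_preV (m + 1)) hw hwP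
      exact S.clopen_contra ⟨x, hxW⟩ hWopen hclW (hWsub.trans (S.preV_subset_V (m + 1)))
    · exact h W subset_rfl hWopen
  refine himg.antisymm ?_
  exact preconn_subset isPreconnected_connectedComponentIn hopen
    ⟨S.f x, mem_connectedComponentIn hfx, mem_image_of_mem _ hxW⟩ hclosed

lemma pieceE_iter (i : ℕ) : ∀ {m : ℕ} {x : ℂ}, x ∈ S.preV (m + i) →
    S.f^[i] '' connectedComponentIn (S.preV (m + i)) x
      = connectedComponentIn (S.preV m) (S.f^[i] x) := by
  induction i with
  | zero => intro m x hx; simp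
  | succ i ih =>
    intro m x hx
    have e : m + (i + 1) = (m + 1) + i := by omega
    rw [e] at hx ⊢
    have h2 : S.f^[i] x ∈ S.preV (m + 1) := by
      have e2 : (m + 1) + i = i + (m + 1) := by omega
      rw [e2] at hx
      exact S.iter_preV i hx
    rw [Function.iterate_succ', Set.image_comp, ih hx, S.pieceE h2]
    rfl

lemma mem_preIm_iff {Y : Set ℂ} : ∀ {m : ℕ} {x : ℂ},
    x ∈ S.preIm Y m ↔ (∀ j < m, S.f^[j] x ∈ S.U) ∧ S.f^[m] x ∈ Y := by
  intro m
  induction m with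
  | zero => intro x; simp [preIm]
  | succ m ih =>
    intro x
    constructor
    · rintro ⟨hU, hpre⟩
      obtain ⟨h1, h2⟩ := ih.mp hpre
      constructor
      · intro j hj
        cases j with
        | zero => exact hU
        | succ j => rw [Function.iterate_succ_apply]; exact h1 j (by omega)
      · rw [Function.iterate_succ_apply]; exact h2
    · rintro ⟨h1, h2⟩
      refine ⟨by simpa using h1 0 (by omega), ih.mpr ⟨?_, ?_⟩⟩
      · intro j hj; rw [← Function.iterate_succ_apply]; exact h1 (j + 1) (by omega)
      · rw [← Function.iterate_succ_apply]; exact h2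

lemma preIm_subset_preV {Y : Set ℂ} {n : ℕ} (hY : Y ⊆ S.preV n) :
    ∀ j, S.preIm Y j ⊆ S.preV (n + j) := by
  intro j
  induction j with
  | zero => exact hY
  | succ j ih => exact fun x hx => ⟨hx.1, ih hx.2⟩

lemma piece_mono {d d' : ℕ} (h : d ≤ d') {A B : Set ℂ} {x y : ℂ}
    (hA : A = connectedComponentIn (S.preV d') x) (hB : B = connectedComponentIn (S.preV d) y)
    {u : ℂ} (hu : u ∈ A ∩ B) : A ⊆ B := by
  subst hA; subst hB
  have hAsub : connectedComponentIn (S.preV d') x ⊆ S.preV d :=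
    (connectedComponentIn_subset _ _).trans (S.preV_antitone h)
  have h1 : connectedComponentIn (S.preV d') x ⊆ connectedComponentIn (S.preV d) u :=
    isPreconnected_connectedComponentIn.subset_connectedComponentIn hu.1 hAsub
  rw [connectedComponentIn_eq hu.2]
  exact h1

lemma comp_is_piece {X : Set ℂ} (hX : S.IsPieceUnion X) {y : ℂ} (hy : y ∈ X) :
    ∃ d, y ∈ S.preV d ∧ connectedComponentIn X y = connectedComponentIn (S.preV d) y := by
  obtain ⟨P, hPfin, hPpiece, rfl⟩ := hX
  have hyCc : y ∈ connectedComponentIn (⋃₀ P) y := mem_connectedComponentIn hy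
  set R := {Q ∈ P | (Q ∩ connectedComponentIn (⋃₀ P) y).Nonempty} with hRdef
  have hRfin : R.Finite := hPfin.subset (sep_subset _ _)
  have hRne : R.Nonempty := by
    obtain ⟨Q, hQ, hyQ⟩ := hy
    exact ⟨Q, hQ, ⟨y, hyQ, hyCc⟩⟩
  obtain ⟨M, hMR, hMmax⟩ := Set.Finite.exists_maximalFor id R hRfin hRne
  have hsubCc : ∀ Q ∈ R, Q ⊆ connectedComponentIn (⋃₀ P) y := by
    rintro Q ⟨hQP, q, hq1, hq2⟩
    obtain ⟨d, x, hx, hQe⟩ := hPpiece Q hQP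
    have hpre : IsPreconnected Q := hQe ▸ isPreconnected_connectedComponentIn
    have hQX : Q ⊆ ⋃₀ P := fun u hu => ⟨Q, hQP, hu⟩
    rw [connectedComponentIn_eq hq2]
    exact hpre.subset_connectedComponentIn hq1 hQX
  obtain ⟨dM, xM, hxM, hMeq⟩ := hPpiece M hMR.1
  have hQM : ∀ Q ∈ R, (Q ∩ M).Nonempty → Q ⊆ M := by
    rintro Q hQR ⟨u, huQ, huM⟩
    obtain ⟨dQ, xQ, hxQ, hQeq⟩ := hPpiece Q hQR.1
    have hQu : connectedComponentIn (S.preV dQ) xQ = connectedComponentIn (S.preV dQ) u :=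
      connectedComponentIn_eq (hQeq ▸ huQ)
    have hMu : connectedComponentIn (S.preV dM) xM = connectedComponentIn (S.preV dM) u :=
      connectedComponentIn_eq (hMeq ▸ huM)
    rcases le_or_gt dM dQ with h | h
    · exact S.piece_mono h hQeq hMeq ⟨huQ, huM⟩
    · have hMQ : M ⊆ Q := S.piece_mono (by omega) hMeq hQeq ⟨huM, huQ⟩
      have : M = Q := hMQ.antisymm (hMmax hQR hMQ)
      rw [this]
  have hMopen : IsOpen M := hMeq ▸ (S.isOpen_preV dM).connectedComponentIn
  have hMCc : M ⊆ connectedComponentIn (⋃₀ P) y := hsubCc M hMR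
  have hclos : ∀ w ∈ connectedComponentIn (⋃₀ P) y, w ∈ closure M → w ∈ M := by
    intro w hwCc hwcl
    obtain ⟨Q, hQP, hwQ⟩ : w ∈ ⋃₀ P := connectedComponentIn_subset _ _ hwCc
    have hQR : Q ∈ R := ⟨hQP, ⟨w, hwQ, hwCc⟩⟩
    have hQopen : IsOpen Q := by
      obtain ⟨d, x, hx, hQe⟩ := hPpiece Q hQP
      exact hQe ▸ (S.isOpen_preV d).connectedComponentIn
    have hnon := mem_closure_iff.mp hwcl Q hQopen hwQ
    exact hQM Q hQR hnon hwQ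
  have hxMM : xM ∈ M := hMeq ▸ mem_connectedComponentIn hxM
  have hCcM : connectedComponentIn (⋃₀ P) y ⊆ M :=
    preconn_subset isPreconnected_connectedComponentIn hMopen ⟨xM, hMCc hxMM, hxMM⟩ hclos
  have hEq : connectedComponentIn (⋃₀ P) y = M := hCcM.antisymm hMCc
  have hyM : y ∈ M := hEq ▸ hyCc
  refine ⟨dM, (hMeq ▸ connectedComponentIn_subset _ _ : M ⊆ S.preV dM) hyM, ?_⟩
  rw [hEq, hMeq]
  exact connectedComponentIn_eq (hMeq ▸ hyM)

lemma no_deeper : ∀ (n : ℕ) (x : ℂ), x ∈ S.preV n →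
    connectedComponentIn (S.preV n) x ⊆ S.preV (n + 1) → False := by
  intro n
  induction n with
  | zero =>
    intro x hx hsub
    have hCo : IsOpen (connectedComponentIn S.V x) := S.hV_open.connectedComponentIn
    have hCU : connectedComponentIn S.V x ⊆ S.U := fun w hw => (hsub hw).1
    have hcl : closure (connectedComponentIn S.V x) ⊆ connectedComponentIn S.V x := by
      intro w hw
      have hwV : w ∈ S.V := S.hUV (closure_mono hCU hw)
      exact cc_closure S.hV_open hw hwV
    exact S.clopen_contra ⟨x, mem_connectedComponentIn hx⟩ hCo hcl
      (connectedComponentIn_subset _ _)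
  | succ n ih =>
    intro x hx hsub
    apply ih (S.f x) hx.2
    rw [← S.pieceE hx]
    rintro _ ⟨w, hw, rfl⟩
    exact (hsub hw).2

end Setup

/-- For a map in the set-up and a nice finite union `X` of puzzle
pieces, for every `z ∈ D(X) ∖ X` and every `0 ≤ i < k(z)`,
`f^i(L_z(X)) ∩ X = ∅`. -/
theorem stmt_1 (S : Setup) (X : Set ℂ) (hX : S.IsPieceUnion X) (hnice : S.Nice X)
    (z : ℂ) (hz : z ∈ S.D X \ X) (k : ℕ) (hk : S.IsLandingTime X z k) :
    ∀ i < k, (S.f^[i] '' S.landComp X z k) ∩ X = ∅ := by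
  intro i hik
  obtain ⟨hzD, hzX⟩ := hz
  obtain ⟨hk1, hkX, hkmin⟩ := hk
  -- iterates of z up to time k stay in U
  have hzU : ∀ j < k, S.f^[j] z ∈ S.U := by
    obtain ⟨m, hm⟩ := mem_iUnion.mp hzD
    have hm' := S.mem_preIm_iff.mp hm
    have hkm : k ≤ m := by
      by_contra h
      push_neg at h
      have hm1 : 1 ≤ m := by
        rcases Nat.eq_zero_or_pos m with rfl | h1
        · exact absurd (by simpa using hm'.2) hzX
        · exact h1
      exact hkmin m hm1 h hm'.2
    exact fun j hj => hm'.1 j (lt_of_lt_of_le hj hkm)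
  obtain ⟨n, hfkPn, hCeq⟩ := S.comp_is_piece hX hkX
  -- hCeq : connectedComponentIn X (S.f^[k] z) = connectedComponentIn (S.preV n) (S.f^[k] z)
  have hCsub : connectedComponentIn X (S.f^[k] z) ⊆ S.preV n := by
    rw [hCeq]; exact connectedComponentIn_subset _ _
  have hzpre : z ∈ S.preIm (connectedComponentIn X (S.f^[k] z)) k :=
    S.mem_preIm_iff.mpr ⟨hzU, mem_connectedComponentIn hkX⟩
  have hpre_sub : S.preIm (connectedComponentIn X (S.f^[k] z)) k ⊆ S.preV (n + k) :=
    S.preIm_subset_preV hCsub k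
  have hzT : z ∈ S.preV (n + k) := hpre_sub hzpre
  have hTsub2 : connectedComponentIn (S.preV (n + k)) z ⊆
      S.preIm (connectedComponentIn X (S.f^[k] z)) k := by
    intro t ht
    have htP : t ∈ S.preV (n + k) := connectedComponentIn_subset _ _ ht
    refine S.mem_preIm_iff.mpr ⟨fun j hj => S.iter_mem_U htP (by omega), ?_⟩
    have himg : S.f^[k] '' connectedComponentIn (S.preV (n + k)) z ⊆
        connectedComponentIn (S.preV n) (S.f^[k] z) := by
      apply IsPreconnected.subset_connectedComponentIn
      · exact isPreconnected_connectedComponentIn.image _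
          ((S.cont_iter k (by omega)).mono (connectedComponentIn_subset _ _))
      · exact mem_image_of_mem _ (mem_connectedComponentIn hzT)
      · rintro _ ⟨w, hw, rfl⟩
        have hw2 : w ∈ S.preV (k + n) := by
          rw [show k + n = n + k from by omega]
          exact connectedComponentIn_subset _ _ hw
        exact S.iter_preV k hw2
    rw [hCeq]
    exact himg (mem_image_of_mem _ ht)
  have hLT : S.landComp X z k = connectedComponentIn (S.preV (n + k)) z := by
    apply subset_antisymm
    · exact connectedComponentIn_mono z hpre_sub
    · exact isPreconnected_connectedComponentIn.subset_connectedComponentIn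
        (mem_connectedComponentIn hzT) hTsub2
  have hQ' : S.f^[i] '' connectedComponentIn (S.preV (n + k)) z
      = connectedComponentIn (S.preV (n + k - i)) (S.f^[i] z) := by
    have e : (n + k - i) + i = n + k := by omega
    have h := S.pieceE_iter i (m := n + k - i) (x := z) (by rw [e]; exact hzT)
    rw [e] at h
    exact h
  rw [hLT]
  by_contra hne
  obtain ⟨y, hyQ, hyX⟩ := Set.nonempty_iff_ne_empty.mpr hne
  rw [hQ'] at hyQ
  have hfiz : S.f^[i] z ∈ S.preV (n + k - i) := by
    have e : i + (n + k - i) = n + k := by omega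
    exact S.iter_preV i (by rw [e]; exact hzT)
  have hfizX : S.f^[i] z ∉ X := by
    rcases Nat.eq_zero_or_pos i with rfl | hi
    · simpa using hzX
    · exact hkmin i hi hik
  obtain ⟨dP, hydP, hPeq⟩ := S.comp_is_piece hX hyX
  rcases le_or_gt dP (n + k - i) with hd | hd
  · -- the piece containing f^[i](L) is inside the component of X containing y
    have hsub : connectedComponentIn (S.preV (n + k - i)) (S.f^[i] z) ⊆
        connectedComponentIn (S.preV dP) y :=
      S.piece_mono hd rfl rfl ⟨hyQ, mem_connectedComponentIn hydP⟩
    have h2 : S.f^[i] z ∈ connectedComponentIn (S.preV dP) y :=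
      hsub (mem_connectedComponentIn hfiz)
    rw [← hPeq] at h2
    exact hfizX (connectedComponentIn_subset _ _ h2)
  · -- the component P of X containing y is strictly inside; use niceness
    have he1 : 1 ≤ k - i := by omega
    have hPQ : connectedComponentIn (S.preV dP) y ⊆
        connectedComponentIn (S.preV (n + k - i)) (S.f^[i] z) :=
      S.piece_mono (by omega) rfl rfl ⟨mem_connectedComponentIn hydP, hyQ⟩
    have hR : S.f^[k - i] '' connectedComponentIn (S.preV dP) y
        = connectedComponentIn (S.preV (dP - (k - i))) (S.f^[k - i] y) := by
      have e2 : (dP - (k - i)) + (k - i) = dP := by omega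
      have h := S.pieceE_iter (k - i) (m := dP - (k - i)) (x := y) (by rw [e2]; exact hydP)
      rw [e2] at h
      exact h
    have hRC : S.f^[k - i] '' connectedComponentIn (S.preV dP) y ⊆
        connectedComponentIn X (S.f^[k] z) := by
      rintro _ ⟨w, hw, rfl⟩
      have hwQ : w ∈ connectedComponentIn (S.preV (n + k - i)) (S.f^[i] z) := hPQ hw
      rw [← hQ'] at hwQ
      obtain ⟨t, htT, rfl⟩ := hwQ
      have hcomp : S.f^[k - i] (S.f^[i] t) = S.f^[k] t := by
        rw [← Function.iterate_add_apply, show (k - i) + i = k from by omega]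
      rw [hcomp]
      exact (S.mem_preIm_iff.mp (hTsub2 htT)).2
    have hnotstrict := hnice y hyX (k - i) he1
    have hRC' : S.f^[k - i] '' connectedComponentIn X y ⊆
        connectedComponentIn X (S.f^[k] z) := by
      rw [hPeq]; exact hRC
    have hReq : S.f^[k - i] '' connectedComponentIn X y
        = connectedComponentIn X (S.f^[k] z) := by
      by_contra hne2
      exact hnotstrict ⟨S.f^[k] z, hkX, ssubset_of_subset_of_ne hRC' hne2⟩
    have hfinal : connectedComponentIn (S.preV n) (S.f^[k] z) ⊆ S.preV (n + 1) := by
      rw [← hCeq, ← hReq, hPeq, hR]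
      exact (connectedComponentIn_subset _ _).trans
        (S.preV_antitone (show n + 1 ≤ dP - (k - i) from by omega))
    exact S.no_deeper n (S.f^[k] z) hfkPn hfinal
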